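/- Let M be a monoid with a partial order making multiplication monotone in each argument, which is also a join-semilattice, and let (·)* : M → M be a saturation operator (for each α: 1 ≤ α*, α ≤ α*, α*·α* ≤ α*, and α* ≤ β whenever 1 ≤ β, α ≤ β, β·β ≤ β) that additionally satisfies: for all f, α, β ∈ M, f·α ≤ β·f implies f·α* ≤ β*·f, and f·α ≥ β·f implies f·α* ≥ β*·f. Then for every α ∈ M, α* is the least fixed point of the map x ↦ 1 ⊔ x·α; that is, α* = 1 ⊔ α*·α, and α* ≤ γ for every γ ∈ M with γ = 1 ⊔ γ·α. -/
import Mathlib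


/-- In an ordered monoid `M` with binary joins (multiplication monotone in each argument),
a saturation operator `s` which additionally satisfies the simulation laws
(`f·α ≤ β·f ⟹ f·α* ≤ β*·f` and `f·α ≥ β·f ⟹ f·α* ≥ β*·f`) produces, for each `α`,
the least fixed point of `x ↦ 1 ⊔ x·α`: we have `s α = 1 ⊔ s α * α`, and `s α ≤ γ`
for every fixed point `γ = 1 ⊔ γ * α`. -/
theorem saturation_is_least_fixed_point {M : Type*} [Monoid M] [SemilatticeSup M]
    [CovariantClass M M (· * ·) (· ≤ ·)] [CovariantClass M M (Function.swap (· * ·)) (· ≤ ·)]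
    (s : M → M)
    (h1 : ∀ α : M, 1 ≤ s α)
    (h2 : ∀ α : M, α ≤ s α)
    (h3 : ∀ α : M, s α * s α ≤ s α)
    (h4 : ∀ α β : M, 1 ≤ β → α ≤ β → β * β ≤ β → s α ≤ β)
    (hsim₁ : ∀ f α β : M, f * α ≤ β * f → f * s α ≤ s β * f)
    (hsim₂ : ∀ f α β : M, β * f ≤ f * α → s β * f ≤ f * s α) :
    ∀ α : M, s α = 1 ⊔ s α * α ∧ ∀ γ : M, γ = 1 ⊔ γ * α → s α ≤ γ := by
  intro α
  -- s 1 ≤ 1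
  have hs1 : s (1 : M) ≤ 1 := h4 1 1 le_rfl le_rfl (by simp)
  -- pre-fixed point lemma
  have key : ∀ γ : M, 1 ≤ γ → γ * α ≤ γ → s α ≤ γ := by
    intro γ hγ1 hγα
    have h : γ * α ≤ 1 * γ := by simpa using hγα
    have h' : γ * s α ≤ s 1 * γ := hsim₁ γ α 1 h
    calc s α = 1 * s α := (one_mul _).symm
      _ ≤ γ * s α := mul_le_mul_left hγ1 _
      _ ≤ s 1 * γ := h'
      _ ≤ 1 * γ := mul_le_mul_left hs1 _
      _ = γ := one_mul _
  -- 1 ⊔ s α * α ≤ s α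
  have hub : 1 ⊔ s α * α ≤ s α :=
    sup_le (h1 α) (le_trans (mul_le_mul_right (h2 α) _) (h3 α))
  have heq : s α = 1 ⊔ s α * α := by
    refine le_antisymm ?_ hub
    refine key _ le_sup_left ?_
    calc (1 ⊔ s α * α) * α ≤ s α * α := mul_le_mul_left hub _
      _ ≤ 1 ⊔ s α * α := le_sup_right
  refine ⟨heq, fun γ hγ => key γ ?_ ?_⟩
  · rw [hγ]; exact le_sup_left
  · rw [hγ]; exact le_sup_right.trans_eq' (by rw [← hγ])
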